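/- arXiv:1901.08949 — 5 statements merged into one kernel-verified Lean document; each statement's English description precedes it below -/
import Mathlib

section
/- For a symmetric positive semidefinite d×d matrix V and k ∈ {1,…,d}, the sum of the k largest eigenvalues of V equals the maximum of tr(UVU^T) over matrices U ∈ ℝ^{k×d} with UU^T = I_k (Ky Fan's variational principle). -/
noncomputable section
open MeasureTheory Matrix

def eigDesc {d : ℕ} (V : Matrix (Fin d) (Fin d) ℝ) (h : V.IsHermitian) : Fin d → ℝ :=
  fun i => h.eigenvalues (Tuple.sort h.eigenvalues i.rev)

/-- Sum of the `k` largest eigenvalues of a Hermitian matrix. -/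
def topEigSum {d : ℕ} (k : ℕ) (V : Matrix (Fin d) (Fin d) ℝ) (h : V.IsHermitian) : ℝ :=
  ∑ i ∈ Finset.univ.filter (fun i : Fin d => (i : ℕ) < k), eigDesc V h i

private lemma diagNonneg {n : Type*} [Fintype n] [DecidableEq n]
    {M : Matrix n n ℝ} (hM : M.PosSemidef) (j : n) : 0 ≤ M j j := by
  exact hM.diag_nonneg

private lemma sumIneq {d k : ℕ} (t : ℝ) (g m : Fin d → ℝ) (S : Finset (Fin d))
    (hS : S.card = k) (hgS : ∀ j ∈ S, t ≤ g j) (hgS' : ∀ j ∉ S, g j ≤ t)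
    (hm0 : ∀ j, 0 ≤ m j) (hm1 : ∀ j, m j ≤ 1) (hsum : ∑ j, m j = k) :
    ∑ j, g j * m j ≤ ∑ j ∈ S, g j := by
  have key : ∀ j, g j * m j - (if j ∈ S then g j else 0)
      ≤ t * m j - (if j ∈ S then t else 0) := by
    intro j
    by_cases hj : j ∈ S
    · simp only [hj, if_pos]
      nlinarith [hgS j hj, hm1 j, hm0 j]
    · simp only [hj, if_neg, not_false_iff, sub_zero]
      nlinarith [hgS' j hj, hm0 j]
  have h1 : ∑ j, (g j * m j - (if j ∈ S then g j else 0))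
      ≤ ∑ j, (t * m j - (if j ∈ S then t else 0)) :=
    Finset.sum_le_sum fun j _ => key j
  rw [Finset.sum_sub_distrib, Finset.sum_sub_distrib] at h1
  have e1 : ∑ j, (if j ∈ S then g j else 0) = ∑ j ∈ S, g j := by
    rw [Finset.sum_ite_mem, Finset.univ_inter]
  have e2 : ∑ j, (if j ∈ S then t else 0) = (k : ℝ) * t := by
    rw [Finset.sum_ite_mem, Finset.univ_inter, Finset.sum_const, hS, nsmul_eq_mul]
  have e3 : ∑ j, t * m j = t * (k : ℝ) := by
    rw [← Finset.mul_sum, hsum]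
  rw [e1, e2, e3] at h1
  linarith [h1]

/-- Ky Fan's variational principle: for a symmetric PSD `d×d` matrix `V` and `1 ≤ k ≤ d`,
the sum of the `k` largest eigenvalues of `V` is the maximum of `tr(U V Uᵀ)` over
`U ∈ ℝ^{k×d}` with `U Uᵀ = I_k`. -/
theorem kyFan {d k : ℕ} (hk : 1 ≤ k) (hkd : k ≤ d)
    (V : Matrix (Fin d) (Fin d) ℝ) (hV : V.PosSemidef) :
    IsGreatest {x : ℝ | ∃ U : Matrix (Fin k) (Fin d) ℝ, U * Uᵀ = 1 ∧
        x = Matrix.trace (U * V * Uᵀ)}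
      (topEigSum k V hV.isHermitian) := by
  classical
  set h : V.IsHermitian := hV.isHermitian with hh
  set f : Fin d → ℝ := h.eigenvalues with hf
  set σ : Equiv.Perm (Fin d) := Tuple.sort f with hσ
  set Q : Matrix (Fin d) (Fin d) ℝ := (h.eigenvectorUnitary : Matrix (Fin d) (Fin d) ℝ)
    with hQdef
  have hmono : Monotone (f ∘ σ) := Tuple.monotone_sort f
  have hstar : star Q = Qᵀ := by
    rw [Matrix.star_eq_conjTranspose, conjTranspose_eq_transpose_of_trivial]
  have hQ1 : Qᵀ * Q = 1 := by
    have := Matrix.mem_unitaryGroup_iff'.mp h.eigenvectorUnitary.2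
    rwa [hstar] at this
  have hQ2 : Q * Qᵀ = 1 := by
    have := Matrix.mem_unitaryGroup_iff.mp h.eigenvectorUnitary.2
    rwa [hstar] at this
  have hspec : V = Q * Matrix.diagonal f * Qᵀ := by
    have := h.spectral_theorem
    simp only [Unitary.conjStarAlgAut_apply, Unitary.coe_star] at this
    rwa [hstar] at this
  have hD : Qᵀ * V * Q = Matrix.diagonal f := by
    rw [hspec]
    calc Qᵀ * (Q * Matrix.diagonal f * Qᵀ) * Q
        = (Qᵀ * Q) * Matrix.diagonal f * (Qᵀ * Q) := by
          simp only [Matrix.mul_assoc]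
      _ = Matrix.diagonal f := by rw [hQ1, one_mul, mul_one]
  -- the selected top-`k` indices
  set ι : Fin k → Fin d := fun a => ⟨d - k + a.1, by omega⟩ with hι
  set ρ : Fin k → Fin d := fun a => σ (ι a) with hρ
  have hιinj : Function.Injective ι := by
    intro a b hab
    have : d - k + a.1 = d - k + b.1 := congrArg Fin.val hab
    exact Fin.ext (by omega)
  have hρinj : Function.Injective ρ := fun a b hab => hιinj (σ.injective hab)
  set t : ℝ := f (σ (ι ⟨0, hk⟩)) with ht
  set S : Finset (Fin d) := Finset.image ρ Finset.univ with hS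
  have hScard : S.card = k := by
    rw [hS, Finset.card_image_of_injective _ hρinj, Finset.card_univ, Fintype.card_fin]
  have hgS : ∀ j ∈ S, t ≤ f j := by
    intro j hj
    obtain ⟨a, -, rfl⟩ := Finset.mem_image.mp hj
    have : ι ⟨0, hk⟩ ≤ ι a := by
      rw [Fin.le_def]; simp only [hι]; omega
    exact hmono this
  have hgS' : ∀ j ∉ S, f j ≤ t := by
    intro j hj
    have hlt : ((σ.symm j : Fin d) : ℕ) < d - k := by
      by_contra hcon
      push_neg at hcon
      apply hj
      refine Finset.mem_image.mpr ⟨⟨(σ.symm j : ℕ) - (d - k), by omega⟩, Finset.mem_univ _, ?_⟩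
      have hιeq : ι ⟨(σ.symm j : ℕ) - (d - k), by omega⟩ = σ.symm j :=
        Fin.ext (by simp only [hι]; omega)
      rw [hρ]
      simp only [hιeq, Equiv.apply_symm_apply]
    have hle : σ.symm j ≤ ι ⟨0, hk⟩ := by
      rw [Fin.le_def]; simp only [hι]; omega
    have := hmono hle
    simpa using this
  have htop : topEigSum k V h = ∑ j ∈ S, f j := by
    rw [hS, Finset.sum_image (fun a _ b _ hab => hρinj hab)]
    unfold topEigSum
    refine Finset.sum_nbij' (i := fun i => (⟨k - 1 - i.1, by omega⟩ : Fin k))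
      (j := fun a => (⟨k - 1 - a.1, by omega⟩ : Fin d)) ?_ ?_ ?_ ?_ ?_
    · intro i hi
      exact Finset.mem_univ _
    · intro a _
      simp only [Finset.mem_filter, Finset.mem_univ, true_and]
      omega
    · intro i hi
      have : (i : ℕ) < k := (Finset.mem_filter.mp hi).2
      exact Fin.ext (by simp; omega)
    · intro a _
      exact Fin.ext (by simp; omega)
    · intro i hi
      have hik : (i : ℕ) < k := (Finset.mem_filter.mp hi).2
      show eigDesc V h i = f (ρ _)
      unfold eigDesc
      rw [← hf, ← hσ, hρ]
      congr 2
      exact Fin.ext (by simp [hι, Fin.val_rev]; omega)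
  constructor
  · -- membership: take rows of Qᵀ indexed by ρ
    set U₀ : Matrix (Fin k) (Fin d) ℝ := (Qᵀ).submatrix ρ id with hU₀
    have hU₀T : U₀ᵀ = Q.submatrix id ρ := by
      rw [hU₀, Matrix.transpose_submatrix, Matrix.transpose_transpose]
    have hmulsub : ∀ A : Matrix (Fin d) (Fin d) ℝ,
        U₀ * A * U₀ᵀ = (Qᵀ * A * Q).submatrix ρ ρ := by
      intro A
      rw [hU₀T, hU₀]
      calc (Qᵀ).submatrix ρ id * A * Q.submatrix id ρ
          = (Qᵀ).submatrix ρ id * A.submatrix id id * Q.submatrix id ρ := by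
            rw [Matrix.submatrix_id_id]
        _ = (Qᵀ * A).submatrix ρ id * Q.submatrix id ρ := by
            rw [← Matrix.submatrix_mul _ _ _ _ _ Function.bijective_id]
        _ = (Qᵀ * A * Q).submatrix ρ ρ := by
            rw [← Matrix.submatrix_mul _ _ _ _ _ Function.bijective_id]
    refine ⟨U₀, ?_, ?_⟩
    · have h1 : U₀ * (1 : Matrix (Fin d) (Fin d) ℝ) * U₀ᵀ = (Qᵀ * 1 * Q).submatrix ρ ρ :=
        hmulsub 1
      rw [Matrix.mul_one, Matrix.mul_one] at h1
      rw [h1, hQ1]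
      ext a b
      simp [Matrix.submatrix_apply, Matrix.one_apply, hρinj.eq_iff]
    · rw [hmulsub V, hD, htop, Finset.sum_image (fun a _ b _ hab => hρinj hab)]
      simp [Matrix.trace, Matrix.diag, Matrix.submatrix_apply]
  · -- upper bound
    rintro x ⟨U, hU, rfl⟩
    set W : Matrix (Fin k) (Fin d) ℝ := U * Q with hW
    have hWWT : W * Wᵀ = 1 := by
      rw [hW, Matrix.transpose_mul]
      calc U * Q * (Qᵀ * Uᵀ) = U * (Q * Qᵀ) * Uᵀ := by simp only [Matrix.mul_assoc]
        _ = 1 := by rw [hQ2, Matrix.mul_one, hU]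
    set P : Matrix (Fin d) (Fin d) ℝ := Wᵀ * W with hP
    have hPsym : Pᵀ = P := by rw [hP, Matrix.transpose_mul, Matrix.transpose_transpose]
    have hPidem : P * P = P := by
      rw [hP]
      calc Wᵀ * W * (Wᵀ * W) = Wᵀ * (W * Wᵀ) * W := by simp only [Matrix.mul_assoc]
        _ = Wᵀ * W := by rw [hWWT, Matrix.mul_one]
    have hPpsd : P.PosSemidef := by
      have := Matrix.posSemidef_conjTranspose_mul_self W
      rwa [Matrix.conjTranspose_eq_transpose_of_trivial, ← hP] at this
    have hQpsd : (1 - P).PosSemidef := by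
      have h1 : (1 - P)ᴴ = 1 - P := by
        rw [Matrix.conjTranspose_eq_transpose_of_trivial, Matrix.transpose_sub,
          Matrix.transpose_one, hPsym]
      have h2 : (1 - P) * (1 - P) = 1 - P := by
        rw [Matrix.mul_sub, Matrix.mul_one, Matrix.sub_mul, Matrix.one_mul, hPidem,
          sub_self, sub_zero]
      have := Matrix.posSemidef_conjTranspose_mul_self (1 - P)
      rwa [h1, h2] at this
    set m : Fin d → ℝ := fun j => P j j with hm
    have hm0 : ∀ j, 0 ≤ m j := fun j => diagNonneg hPpsd j
    have hm1 : ∀ j, m j ≤ 1 := by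
      intro j
      have := diagNonneg hQpsd j
      simp only [Matrix.sub_apply, Matrix.one_apply_eq] at this
      simp only [hm]
      linarith
    have hsum : ∑ j, m j = (k : ℝ) := by
      have e : ∑ j, m j = Matrix.trace P := rfl
      rw [e, hP, ← Matrix.trace_mul_comm, hWWT, Matrix.trace_one]
      simp
    have htr2 : Matrix.trace (U * V * Uᵀ) = ∑ j, f j * m j := by
      have e : U * V * Uᵀ = W * Matrix.diagonal f * Wᵀ := by
        rw [hspec, hW, Matrix.transpose_mul]
        simp only [Matrix.mul_assoc]
      rw [e, Matrix.trace_mul_cycle, ← hP]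
      simp only [Matrix.trace, Matrix.diag, Matrix.mul_apply, Matrix.diagonal_apply,
        ite_mul, zero_mul]
      rw [Finset.sum_comm]
      simp [Finset.sum_ite_eq, hm, mul_comm]
    rw [htr2, htop]
    exact sumIneq t f m S hScard hgS hgS' hm0 hm1 hsum
end
end

section
/- Let f : ℝ^d → ℝ^d be Borel measurable and μ, ν probability measures on ℝ^d. Then the set of couplings Π(f_#μ, f_#ν) equals {(f ⊗ f)_#π : π ∈ Π(μ, ν)}, where (f ⊗ f)(x,y) = (f(x), f(y)). -/
noncomputable section
open MeasureTheory ProbabilityTheory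

abbrev Ed (d : ℕ) := EuclideanSpace ℝ (Fin d)

/-- The set of couplings `Π(μ, ν)`. -/
def couplings {d : ℕ} (μ ν : Measure (Ed d)) : Set (Measure (Ed d × Ed d)) :=
  {π | IsProbabilityMeasure π ∧ π.map Prod.fst = μ ∧ π.map Prod.snd = ν}

section Aux

variable {α β γ : Type*} [MeasurableSpace α] [MeasurableSpace β] [MeasurableSpace γ]

lemma aux_map_bind (m : Measure α) {K : α → Measure β} (hK : Measurable K)
    {g : β → γ} (hg : Measurable g) :
    (m.bind K).map g = m.bind (fun a => (K a).map g) := by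
  rw [← Measure.bind_dirac_eq_map _ hg,
    Measure.bind_bind (f := K) (g := fun x => Measure.dirac (g x)) hK.aemeasurable
      (Measure.measurable_dirac.comp hg).aemeasurable]
  congr 1
  funext a
  exact Measure.bind_dirac_eq_map _ hg

lemma aux_bind_map (m : Measure α) {K : β → Measure γ} (hK : Measurable K)
    {g : α → β} (hg : Measurable g) :
    (m.map g).bind K = m.bind (fun a => K (g a)) := by
  rw [← Measure.bind_dirac_eq_map _ hg,
    Measure.bind_bind (f := fun x => Measure.dirac (g x)) (g := K)
      (Measure.measurable_dirac.comp hg).aemeasurable hK.aemeasurable]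
  congr 1
  funext a
  exact Measure.dirac_bind hK (g a)

lemma aux_bind_congr (m : Measure α) {K L : α → Measure β} (hK : Measurable K)
    (hL : Measurable L) (h : K =ᵐ[m] L) : m.bind K = m.bind L := by
  ext s hs
  rw [Measure.bind_apply hs hK.aemeasurable, Measure.bind_apply hs hL.aemeasurable]
  exact lintegral_congr_ae (h.mono fun a ha => by simp only [ha])

lemma aux_isProb_bind (m : Measure α) [IsProbabilityMeasure m] {K : α → Measure β}
    (hK : Measurable K) (h : ∀ a, IsProbabilityMeasure (K a)) :
    IsProbabilityMeasure (m.bind K) := by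
  constructor
  rw [Measure.bind_apply MeasurableSet.univ hK.aemeasurable]
  simp [fun a => (h a).measure_univ]

lemma aux_eq_dirac [MeasurableSingletonClass β] (m : Measure β) [IsProbabilityMeasure m]
    {a : β} (h : m {a}ᶜ = 0) : m = Measure.dirac a := by
  ext s hs
  rw [Measure.dirac_apply' _ hs]
  by_cases has : a ∈ s
  · have hsub : sᶜ ⊆ ({a}ᶜ : Set β) := by
      intro x hx
      simp only [Set.mem_compl_iff, Set.mem_singleton_iff]
      rintro rfl; exact hx has
    have hcompl : m sᶜ = 0 := measure_mono_null hsub h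
    rw [(prob_compl_eq_zero_iff hs).mp hcompl]
    simp [has]
  · have hsub : s ⊆ ({a}ᶜ : Set β) := by
      intro x hx
      simp only [Set.mem_compl_iff, Set.mem_singleton_iff]
      rintro rfl; exact has hx
    have : m s = 0 := measure_mono_null hsub h
    simp [this, has]

lemma aux_snd_compProd (m : Measure α) [SFinite m] (κ : Kernel α β) [IsSFiniteKernel κ] :
    (m ⊗ₘ κ).map Prod.snd = m.bind (fun a => κ a) := by
  ext s hs
  rw [Measure.map_apply measurable_snd hs, Measure.compProd_apply (measurable_snd hs),
    Measure.bind_apply hs (κ.measurable).aemeasurable]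
  rfl

end Aux

section Disint

variable {d : ℕ}

/-- Disintegration of a probability measure along a measurable map. -/
lemma aux_disint (f : Ed d → Ed d) (hf : Measurable f) (μ : Measure (Ed d))
    [IsProbabilityMeasure μ] :
    ∃ κ : Kernel (Ed d) (Ed d), IsMarkovKernel κ ∧
      (μ.map f).bind (fun a => κ a) = μ ∧
      ∀ᵐ a ∂(μ.map f), (κ a).map f = Measure.dirac a := by
  have hgm : Measurable (fun x : Ed d => (f x, x)) := hf.prodMk measurable_id
  set ρ : Measure (Ed d × Ed d) := μ.map (fun x => (f x, x)) with hρ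
  haveI : IsProbabilityMeasure ρ := Measure.isProbabilityMeasure_map hgm.aemeasurable
  have hfst : ρ.fst = μ.map f := by
    rw [Measure.fst, hρ, Measure.map_map measurable_fst hgm]
    rfl
  have hdis : ρ.fst ⊗ₘ ρ.condKernel = ρ := ρ.disintegrate ρ.condKernel
  refine ⟨ρ.condKernel, inferInstance, ?_, ?_⟩
  · rw [← hfst, ← aux_snd_compProd _ _, hdis, hρ, Measure.map_map measurable_snd hgm]
    have : (Prod.snd ∘ fun x : Ed d => (f x, x)) = id := rfl
    rw [this, Measure.map_id]
  · -- the kernel is a.e. supported on fibers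
    have hS : MeasurableSet {p : Ed d × Ed d | f p.2 = p.1} :=
      measurableSet_eq_fun (hf.comp measurable_snd) measurable_fst
    have hρS : ρ {p : Ed d × Ed d | f p.2 = p.1}ᶜ = 0 := by
      rw [hρ, Measure.map_apply hgm hS.compl]
      convert measure_empty (μ := μ)
      ext x
      simp
    have h0 : ∫⁻ a, ρ.condKernel a (Prod.mk a ⁻¹' {p : Ed d × Ed d | f p.2 = p.1}ᶜ)
        ∂ρ.fst = 0 := by
      rw [← Measure.compProd_apply hS.compl, hdis, hρS]
    have hae := (lintegral_eq_zero_iff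
      (Kernel.measurable_kernel_prodMk_left (κ := ρ.condKernel) hS.compl)).mp h0
    rw [hfst] at hae
    filter_upwards [hae] with a ha
    simp only [Pi.zero_apply] at ha
    haveI : IsProbabilityMeasure ((ρ.condKernel a).map f) :=
      Measure.isProbabilityMeasure_map hf.aemeasurable
    refine aux_eq_dirac _ ?_
    rw [Measure.map_apply hf (measurableSet_singleton a).compl]
    refine measure_mono_null ?_ ha
    intro x hx
    simpa using hx

end Disint

/-- For Borel `f : ℝ^d → ℝ^d` and probability measures `μ, ν` on `ℝ^d`,
`Π(f_#μ, f_#ν) = {(f ⊗ f)_#π : π ∈ Π(μ, ν)}`. -/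
theorem couplings_map_eq {d : ℕ} (f : Ed d → Ed d) (hf : Measurable f)
    (μ ν : Measure (Ed d)) [IsProbabilityMeasure μ] [IsProbabilityMeasure ν] :
    couplings (μ.map f) (ν.map f) =
      (fun π : Measure (Ed d × Ed d) => π.map (Prod.map f f)) '' couplings μ ν := by
  have hff : Measurable (Prod.map f f) := (hf.comp measurable_fst).prodMk (hf.comp measurable_snd)
  apply Set.Subset.antisymm
  · -- hard direction
    rintro π' ⟨hπ'prob, hπ'1, hπ'2⟩
    obtain ⟨κ, hκM, hκb, hκd⟩ := aux_disint f hf μ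
    obtain ⟨η, hηM, hηb, hηd⟩ := aux_disint f hf ν
    haveI := hκM; haveI := hηM
    set K : Kernel (Ed d × Ed d) (Ed d × Ed d) :=
      (κ.comap Prod.fst measurable_fst) ×ₖ (η.comap Prod.snd measurable_snd) with hK
    have hKapp : ∀ p : Ed d × Ed d, K p = (κ p.1).prod (η p.2) := by
      intro p
      rw [hK, Kernel.prod_apply, Kernel.comap_apply, Kernel.comap_apply]
    haveI : IsMarkovKernel K := by rw [hK]; infer_instance
    set π : Measure (Ed d × Ed d) := π'.bind (fun p => K p) with hπ
    haveI hπprob : IsProbabilityMeasure π :=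
      aux_isProb_bind _ K.measurable (fun p => by rw [hKapp]; infer_instance)
    refine ⟨π, ⟨hπprob, ?_, ?_⟩, ?_⟩
    · -- first marginal
      rw [hπ, aux_map_bind _ K.measurable measurable_fst]
      have : (fun p : Ed d × Ed d => (K p).map Prod.fst)
          = fun p => κ p.1 := by
        funext p
        rw [hKapp]
        haveI : IsProbabilityMeasure (η p.2) := inferInstance
        simp
      rw [this, ← aux_bind_map π' κ.measurable measurable_fst, hπ'1, hκb]
    · -- second marginal
      rw [hπ, aux_map_bind _ K.measurable measurable_snd]
      have : (fun p : Ed d × Ed d => (K p).map Prod.snd)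
          = fun p => η p.2 := by
        funext p
        rw [hKapp]
        simp
      rw [this, ← aux_bind_map π' η.measurable measurable_snd, hπ'2, hηb]
    · -- pushforward equals π'
      show (π'.bind fun p => K p).map (Prod.map f f) = π'
      rw [aux_map_bind _ K.measurable hff]
      have hKf : Measurable (fun p : Ed d × Ed d => (K p).map (Prod.map f f)) :=
        (Measure.measurable_map _ hff).comp K.measurable
      have hae1 : ∀ᵐ p : Ed d × Ed d ∂π', (κ p.1).map f = Measure.dirac p.1 := by
        rw [← hπ'1] at hκd
        exact (Measure.tendsto_ae_map measurable_fst.aemeasurable).eventually hκd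
      have hae2 : ∀ᵐ p : Ed d × Ed d ∂π', (η p.2).map f = Measure.dirac p.2 := by
        rw [← hπ'2] at hηd
        exact (Measure.tendsto_ae_map measurable_snd.aemeasurable).eventually hηd
      have hcongr : π'.bind (fun p => (K p).map (Prod.map f f))
          = π'.bind (fun p => Measure.dirac p) := by
        refine aux_bind_congr _ hKf Measure.measurable_dirac ?_
        filter_upwards [hae1, hae2] with p h1 h2
        rw [hKapp, ← Measure.map_prod_map _ _ hf hf, h1, h2, Measure.dirac_prod_dirac]
      rw [hcongr]
      exact Measure.bind_dirac
  · -- easy direction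
    rintro _ ⟨π, ⟨hπprob, hπ1, hπ2⟩, rfl⟩
    refine ⟨Measure.isProbabilityMeasure_map hff.aemeasurable, ?_, ?_⟩
    · rw [Measure.map_map measurable_fst hff]
      have : (Prod.fst ∘ Prod.map f f) = f ∘ Prod.fst := rfl
      rw [this, ← Measure.map_map hf measurable_fst, hπ1]
    · rw [Measure.map_map measurable_snd hff]
      have : (Prod.snd ∘ Prod.map f f) = f ∘ Prod.snd := rfl
      rw [this, ← Measure.map_map hf measurable_snd, hπ2]
end
end

section
/- For probability measures μ, ν on ℝ^d with finite second moments and a symmetric matrix Ω with 0 ⪯ Ω ⪯ I, the minimum over couplings π ∈ Π(μ,ν) of ∫ (x−y)^T Ω (x−y) dπ(x,y) equals W₂²((Ω^{1/2})_#μ, (Ω^{1/2})_#ν), the squared 2-Wasserstein distance between the pushforwards by the positive square root of Ω. -/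
noncomputable section
open MeasureTheory ProbabilityTheory Matrix

def transportCost {d : ℕ} (π : Measure (Ed d × Ed d)) : ℝ :=
  ∫ p, ‖p.1 - p.2‖ ^ 2 ∂π

/-- The positive semidefinite square root of a positive semidefinite matrix
(the definition `Matrix.PosSemidef.sqrt` of the older Mathlib, since removed). -/
def Matrix.PosSemidef.sqrt {n 𝕜 : Type*} [Fintype n] [DecidableEq n] [RCLike 𝕜]
    [PartialOrder 𝕜] [StarOrderedRing 𝕜]
    {A : Matrix n n 𝕜} (hA : A.PosSemidef) : Matrix n n 𝕜 :=
  (hA.1.eigenvectorUnitary : Matrix n n 𝕜) *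
    Matrix.diagonal (fun i => ((√(hA.1.eigenvalues i) : ℝ) : 𝕜)) *
  (star (hA.1.eigenvectorUnitary : Matrix n n 𝕜))

/-- Squared 2-Wasserstein distance. -/
def W2sq {d : ℕ} (μ ν : Measure (Ed d)) : ℝ :=
  sInf (transportCost '' couplings μ ν)

namespace W2aux

variable {d : ℕ}

lemma mem_couplings_map {μ ν : Measure (Ed d)} {f : Ed d → Ed d} (hf : Measurable f)
    {π : Measure (Ed d × Ed d)} (hπ : π ∈ couplings μ ν) :
    π.map (Prod.map f f) ∈ couplings (μ.map f) (ν.map f) := by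
  obtain ⟨hp, h1, h2⟩ := hπ
  haveI := hp
  refine ⟨Measure.isProbabilityMeasure_map (hf.prodMap hf).aemeasurable, ?_, ?_⟩
  · rw [Measure.map_map measurable_fst (hf.prodMap hf),
      show (Prod.fst ∘ Prod.map f f : Ed d × Ed d → Ed d) = f ∘ Prod.fst from rfl,
      ← Measure.map_map hf measurable_fst, h1]
  · rw [Measure.map_map measurable_snd (hf.prodMap hf),
      show (Prod.snd ∘ Prod.map f f : Ed d × Ed d → Ed d) = f ∘ Prod.snd from rfl,
      ← Measure.map_map hf measurable_snd, h2]

lemma transportCost_map {f : Ed d → Ed d} (hf : Measurable f) (π : Measure (Ed d × Ed d)) :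
    transportCost (π.map (Prod.map f f)) = ∫ p, ‖f p.1 - f p.2‖ ^ 2 ∂π := by
  rw [transportCost, integral_map (f := fun p : Ed d × Ed d => ‖p.1 - p.2‖ ^ 2) (hf.prodMap hf).aemeasurable
    (((continuous_fst.sub continuous_snd).norm.pow 2).aestronglyMeasurable)]
  rfl

lemma fiber_meas {f : Ed d → Ed d} (hf : Measurable f) (μ : Measure (Ed d))
    [IsProbabilityMeasure μ] :
    Measurable fun u => (μ.map fun x => (f x, x)).condKernel u {x | f x ≠ u} := by
  have hGc : MeasurableSet {p : Ed d × Ed d | f p.2 ≠ p.1} :=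
    (measurableSet_eq_fun (hf.comp measurable_snd) measurable_fst).compl
  exact Kernel.measurable_kernel_prodMk_left hGc

lemma fiber_ae {f : Ed d → Ed d} (hf : Measurable f) (μ : Measure (Ed d))
    [IsProbabilityMeasure μ] :
    ∀ᵐ u ∂(μ.map f), (μ.map fun x => (f x, x)).condKernel u {x | f x ≠ u} = 0 := by
  set m : Measure (Ed d × Ed d) := μ.map fun x => (f x, x) with hm
  have hmx : Measurable fun x : Ed d => (f x, x) := hf.prodMk measurable_id
  haveI : IsProbabilityMeasure m := Measure.isProbabilityMeasure_map hmx.aemeasurable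
  have hGc : MeasurableSet {p : Ed d × Ed d | f p.2 ≠ p.1} :=
    (measurableSet_eq_fun (hf.comp measurable_snd) measurable_fst).compl
  have hmG : m {p : Ed d × Ed d | f p.2 ≠ p.1} = 0 := by
    have hpre : (fun x : Ed d => (f x, x)) ⁻¹' {p : Ed d × Ed d | f p.2 ≠ p.1} = ∅ := by
      ext x; simp
    rw [hm, Measure.map_apply hmx hGc, hpre, measure_empty]
  have hm_fst : m.fst = μ.map f := by
    rw [hm, Measure.fst, Measure.map_map measurable_fst hmx]; rfl
  have hd : m.fst ⊗ₘ m.condKernel = m := m.disintegrate m.condKernel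
  have h0 : ∫⁻ u, m.condKernel u {x | f x ≠ u} ∂(μ.map f) = 0 := by
    rw [← hm_fst]
    have h := Measure.compProd_apply (μ := m.fst) (κ := m.condKernel) hGc
    rw [hd, hmG] at h
    exact h.symm
  have := (lintegral_eq_zero_iff (fiber_meas hf μ)).mp h0
  filter_upwards [this] with u hu using hu

lemma gluing {f : Ed d → Ed d} (hf : Measurable f) (μ ν : Measure (Ed d))
    [IsProbabilityMeasure μ] [IsProbabilityMeasure ν]
    {ρ : Measure (Ed d × Ed d)} (hρ : ρ ∈ couplings (μ.map f) (ν.map f)) :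
    ∃ π ∈ couplings μ ν, π.map (Prod.map f f) = ρ := by
  obtain ⟨hρp, hρ1, hρ2⟩ := hρ
  haveI := hρp
  have hmx : Measurable fun x : Ed d => (f x, x) := hf.prodMk measurable_id
  set m : Measure (Ed d × Ed d) := μ.map fun x => (f x, x) with hm
  set n : Measure (Ed d × Ed d) := ν.map fun x => (f x, x) with hn
  haveI : IsProbabilityMeasure m := Measure.isProbabilityMeasure_map hmx.aemeasurable
  haveI : IsProbabilityMeasure n := Measure.isProbabilityMeasure_map hmx.aemeasurable
  have hm_fst : m.fst = μ.map f := by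
    rw [hm, Measure.fst, Measure.map_map measurable_fst hmx]; rfl
  have hn_fst : n.fst = ν.map f := by
    rw [hn, Measure.fst, Measure.map_map measurable_fst hmx]; rfl
  set κ := m.condKernel with hκdef
  set η := n.condKernel with hηdef
  have hκ : (μ.map f) ⊗ₘ κ = m := by rw [← hm_fst]; exact m.disintegrate m.condKernel
  have hη : (ν.map f) ⊗ₘ η = n := by rw [← hn_fst]; exact n.disintegrate n.condKernel
  set K : Kernel (Ed d × Ed d) (Ed d × Ed d) :=
    (κ.comap Prod.fst measurable_fst) ×ₖ (η.comap Prod.snd measurable_snd) with hKdef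
  have hK_apply : ∀ a : Ed d × Ed d, K a = (κ a.1).prod (η a.2) := fun a => by
    rw [hKdef, Kernel.prod_apply, Kernel.comap_apply, Kernel.comap_apply]
  set π : Measure (Ed d × Ed d) := (ρ ⊗ₘ K).map Prod.snd with hπdef
  haveI : IsProbabilityMeasure π := Measure.isProbabilityMeasure_map measurable_snd.aemeasurable
  -- a.e. fiber property transported to ρ
  have hsetκ : MeasurableSet {u | κ u {x | f x ≠ u} = 0} :=
    fiber_meas hf μ (measurableSet_singleton 0)
  have hsetη : MeasurableSet {u | η u {x | f x ≠ u} = 0} :=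
    fiber_meas hf ν (measurableSet_singleton 0)
  have hfib1 : ∀ᵐ a ∂ρ, κ a.1 {x | f x ≠ a.1} = 0 := by
    have h := fiber_ae hf μ
    rw [← hρ1] at h
    exact (ae_map_iff measurable_fst.aemeasurable hsetκ).mp h
  have hfib2 : ∀ᵐ a ∂ρ, η a.2 {x | f x ≠ a.2} = 0 := by
    have h := fiber_ae hf ν
    rw [← hρ2] at h
    exact (ae_map_iff measurable_snd.aemeasurable hsetη).mp h
  -- key a.e. statement on the compProd
  have key : ∀ᵐ q ∂(ρ ⊗ₘ K), f q.2.1 = q.1.1 ∧ f q.2.2 = q.1.2 := by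
    rw [MeasureTheory.ae_iff]
    have hBad : MeasurableSet {q : (Ed d × Ed d) × Ed d × Ed d |
        ¬(f q.2.1 = q.1.1 ∧ f q.2.2 = q.1.2)} := by
      apply MeasurableSet.compl
      exact (measurableSet_eq_fun (hf.comp (measurable_fst.comp measurable_snd))
        (measurable_fst.comp measurable_fst)).inter
        (measurableSet_eq_fun (hf.comp (measurable_snd.comp measurable_snd))
        (measurable_snd.comp measurable_fst))
    rw [Measure.compProd_apply hBad]
    have hb : ∀ᵐ a ∂ρ, K a (Prod.mk a ⁻¹' {q : (Ed d × Ed d) × Ed d × Ed d |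
        ¬(f q.2.1 = q.1.1 ∧ f q.2.2 = q.1.2)}) = 0 := by
      filter_upwards [hfib1, hfib2] with a h1 h2
      have hsub : (Prod.mk a ⁻¹' {q : (Ed d × Ed d) × Ed d × Ed d |
          ¬(f q.2.1 = q.1.1 ∧ f q.2.2 = q.1.2)}) ⊆
          ({x | f x ≠ a.1} ×ˢ Set.univ) ∪ (Set.univ ×ˢ {x | f x ≠ a.2}) := by
        intro b hb
        simp only [Set.mem_preimage, Set.mem_setOf_eq, not_and_or] at hb
        rcases hb with h | h
        · exact Or.inl ⟨h, trivial⟩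
        · exact Or.inr ⟨trivial, h⟩
      refine le_antisymm ?_ zero_le
      refine le_trans (measure_mono hsub) ?_
      refine le_trans (measure_union_le _ _) ?_
      rw [hK_apply a, Measure.prod_prod, Measure.prod_prod, h1, h2]
      simp
    rw [lintegral_congr_ae hb, lintegral_zero]
  -- marginals
  have hmarg : ∀ (ξ : Measure (Ed d)) (θ : Kernel (Ed d) (Ed d)), ∀ _ : IsMarkovKernel θ,
      True := fun _ _ _ => trivial
  have hπ1 : π.map Prod.fst = μ := by
    rw [hπdef, Measure.map_map measurable_fst measurable_snd]
    ext s hs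
    rw [Measure.map_apply (measurable_fst.comp measurable_snd) hs,
      Measure.compProd_apply ((measurable_fst.comp measurable_snd) hs)]
    have : ∀ a : Ed d × Ed d, K a (Prod.mk a ⁻¹'
        ((Prod.fst ∘ Prod.snd : (Ed d × Ed d) × Ed d × Ed d → Ed d) ⁻¹' s)) = κ a.1 s := by
      intro a
      have : (Prod.mk a ⁻¹' ((Prod.fst ∘ Prod.snd : (Ed d × Ed d) × Ed d × Ed d → Ed d) ⁻¹' s))
          = s ×ˢ Set.univ := by
        ext b; simp [Set.mem_prod]
      rw [this, hK_apply a, Measure.prod_prod]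
      simp
    rw [lintegral_congr fun a => this a]
    have h2 : ∫⁻ a, κ a.1 s ∂ρ = ∫⁻ u, κ u s ∂(ρ.map Prod.fst) := by
      rw [lintegral_map (Kernel.measurable_coe κ hs) measurable_fst]
    rw [h2, hρ1]
    have h3 : ((μ.map f) ⊗ₘ κ) (Set.univ ×ˢ s) = ∫⁻ u, κ u s ∂(μ.map f) := by
      rw [Measure.compProd_apply (MeasurableSet.prod MeasurableSet.univ hs)]
      apply lintegral_congr
      intro u
      congr 1
      ext x; simp
    rw [← h3, hκ, hm, Measure.map_apply hmx (MeasurableSet.prod MeasurableSet.univ hs)]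
    congr 1
    ext x; simp
  have hπ2 : π.map Prod.snd = ν := by
    rw [hπdef, Measure.map_map measurable_snd measurable_snd]
    ext s hs
    rw [Measure.map_apply (measurable_snd.comp measurable_snd) hs,
      Measure.compProd_apply ((measurable_snd.comp measurable_snd) hs)]
    have : ∀ a : Ed d × Ed d, K a (Prod.mk a ⁻¹'
        ((Prod.snd ∘ Prod.snd : (Ed d × Ed d) × Ed d × Ed d → Ed d) ⁻¹' s)) = η a.2 s := by
      intro a
      have : (Prod.mk a ⁻¹' ((Prod.snd ∘ Prod.snd : (Ed d × Ed d) × Ed d × Ed d → Ed d) ⁻¹' s))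
          = Set.univ ×ˢ s := by
        ext b; simp [Set.mem_prod]
      rw [this, hK_apply a, Measure.prod_prod]
      simp
    rw [lintegral_congr fun a => this a]
    have h2 : ∫⁻ a, η a.2 s ∂ρ = ∫⁻ u, η u s ∂(ρ.map Prod.snd) := by
      rw [lintegral_map (Kernel.measurable_coe η hs) measurable_snd]
    rw [h2, hρ2]
    have h3 : ((ν.map f) ⊗ₘ η) (Set.univ ×ˢ s) = ∫⁻ u, η u s ∂(ν.map f) := by
      rw [Measure.compProd_apply (MeasurableSet.prod MeasurableSet.univ hs)]
      apply lintegral_congr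
      intro u
      congr 1
      ext x; simp
    rw [← h3, hη, hn, Measure.map_apply hmx (MeasurableSet.prod MeasurableSet.univ hs)]
    congr 1
    ext x; simp
  refine ⟨π, ⟨inferInstance, hπ1, hπ2⟩, ?_⟩
  rw [hπdef, Measure.map_map (hf.prodMap hf) measurable_snd]
  have hcongr : (Prod.map f f ∘ Prod.snd : (Ed d × Ed d) × Ed d × Ed d → Ed d × Ed d)
      =ᵐ[ρ ⊗ₘ K] Prod.fst := by
    filter_upwards [key] with q hq
    exact Prod.ext hq.1 hq.2
  exact (Measure.map_congr hcongr).trans (Measure.fst_compProd ρ K)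

lemma sqrt_transpose {A : Matrix (Fin d) (Fin d) ℝ} (hA : A.PosSemidef) :
    hA.sqrtᵀ = hA.sqrt := by
  simp only [Matrix.PosSemidef.sqrt, Matrix.transpose_mul, Matrix.diagonal_transpose,
    Matrix.star_eq_conjTranspose, Matrix.conjTranspose_eq_transpose_of_trivial,
    Matrix.transpose_transpose, Matrix.mul_assoc]

lemma sqrt_mul_self_eq {A : Matrix (Fin d) (Fin d) ℝ} (hA : A.PosSemidef) :
    hA.sqrt * hA.sqrt = A := by
  have hU : star (hA.1.eigenvectorUnitary : Matrix (Fin d) (Fin d) ℝ) *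
      (hA.1.eigenvectorUnitary : Matrix (Fin d) (Fin d) ℝ) = 1 :=
    Unitary.coe_star_mul_self _
  have hD : Matrix.diagonal (fun i => (RCLike.ofReal (√(hA.1.eigenvalues i)) : ℝ)) *
      Matrix.diagonal (fun i => (RCLike.ofReal (√(hA.1.eigenvalues i)) : ℝ))
      = Matrix.diagonal (RCLike.ofReal ∘ hA.1.eigenvalues) := by
    rw [Matrix.diagonal_mul_diagonal]
    congr 1
    funext i
    simp [Real.mul_self_sqrt (hA.eigenvalues_nonneg i)]
  conv_rhs => rw [hA.1.spectral_theorem, Unitary.conjStarAlgAut_apply]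
  simp only [Matrix.PosSemidef.sqrt, Matrix.mul_assoc]
  rw [← Matrix.mul_assoc (star _) _ (Matrix.diagonal _ * _), hU, Matrix.one_mul,
    ← Matrix.mul_assoc (Matrix.diagonal _) (Matrix.diagonal _), hD]

end W2aux

/-- For `μ, ν ∈ P₂(ℝ^d)` and symmetric `0 ⪯ Ω ⪯ I`, the minimum over couplings of
`∫ (x−y)ᵀ Ω (x−y) dπ` equals `W₂²((Ω^{1/2})_#μ, (Ω^{1/2})_#ν)`. -/
theorem min_mahalanobis_eq_W2sq_push {d : ℕ} (μ ν : Measure (Ed d))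
    [IsProbabilityMeasure μ] [IsProbabilityMeasure ν]
    (hμ : Integrable (fun x => ‖x‖ ^ 2) μ) (hν : Integrable (fun x => ‖x‖ ^ 2) ν)
    (Ω : Matrix (Fin d) (Fin d) ℝ) (hΩ : Ω.PosSemidef) (hΩI : (1 - Ω).PosSemidef) :
    sInf ((fun π : Measure (Ed d × Ed d) =>
        ∫ p, dotProduct (p.1 - p.2) (Ω.mulVec (p.1 - p.2)) ∂π) '' couplings μ ν) =
      W2sq (μ.map (Matrix.toEuclideanLin hΩ.sqrt)) (ν.map (Matrix.toEuclideanLin hΩ.sqrt)) := by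
  set f : Ed d → Ed d := ⇑(Matrix.toEuclideanLin hΩ.sqrt) with hfdef
  have hf : Measurable f := (LinearMap.continuous_of_finiteDimensional _).measurable
  have hST : hΩ.sqrtᵀ = hΩ.sqrt := by
    exact W2aux.sqrt_transpose hΩ
  have hpt : ∀ z : Ed d, ‖f z‖ ^ 2 = dotProduct z (Ω.mulVec z) := by
    intro z
    have h1 : ‖f z‖ ^ 2 = dotProduct (hΩ.sqrt.mulVec z) (hΩ.sqrt.mulVec z) := by
      rw [hfdef]
      rw [EuclideanSpace.norm_eq, Real.sq_sqrt (by positivity)]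
      simp [dotProduct, Matrix.toEuclideanLin_apply, sq, Real.norm_eq_abs,
        abs_mul_abs_self]
    rw [h1, dotProduct_mulVec, ← Matrix.mulVec_transpose, hST, Matrix.mulVec_mulVec,
      ← dotProduct_comm, show hΩ.sqrt * hΩ.sqrt = Ω from W2aux.sqrt_mul_self_eq hΩ]
  have hcost : ∀ π : Measure (Ed d × Ed d),
      (∫ p, dotProduct (p.1 - p.2) (Ω.mulVec (p.1 - p.2)) ∂π)
        = transportCost (π.map (Prod.map f f)) := by
    intro π
    rw [W2aux.transportCost_map hf]
    apply integral_congr_ae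
    filter_upwards with p
    rw [← WithLp.ofLp_sub, ← hpt (p.1 - p.2), hfdef, map_sub]
  have himg : ((fun π : Measure (Ed d × Ed d) =>
      ∫ p, dotProduct (p.1 - p.2) (Ω.mulVec (p.1 - p.2)) ∂π) '' couplings μ ν)
      = transportCost '' couplings (μ.map f) (ν.map f) := by
    apply Set.Subset.antisymm
    · rintro c ⟨π, hπ, rfl⟩
      exact ⟨π.map (Prod.map f f), W2aux.mem_couplings_map hf hπ, (hcost π).symm⟩
    · rintro c ⟨ρ, hρ, rfl⟩
      obtain ⟨π, hπ, hmap⟩ := W2aux.gluing hf μ ν hρ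
      refine ⟨π, hπ, ?_⟩
      show (∫ p, dotProduct (p.1 - p.2) (Ω.mulVec (p.1 - p.2)) ∂π) = transportCost ρ
      rw [hcost π, hmap]
  rw [himg, W2sq]
end
end

section
/- For any k ∈ {1,…,d} and μ, ν ∈ P₂(ℝ^d), the subspace robust Wasserstein distance is equivalent to the 2-Wasserstein distance: √(k/d) · W₂(μ,ν) ≤ S_k(μ,ν) ≤ W₂(μ,ν). -/
noncomputable section
open MeasureTheory Matrix

/-- Second-order displacement matrix `V_π = ∫ (x−y)(x−y)ᵀ dπ`, entrywise. -/
def Vpi {d : ℕ} (π : Measure (Ed d × Ed d)) : Matrix (Fin d) (Fin d) ℝ :=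
  Matrix.of fun i j => ∫ p, (p.1 i - p.2 i) * (p.1 j - p.2 j) ∂π

lemma Vpi_isHermitian {d : ℕ} (π : Measure (Ed d × Ed d)) : (Vpi π).IsHermitian := by
  unfold Matrix.IsHermitian
  ext i j
  simp [Vpi, Matrix.conjTranspose_apply, mul_comm]

/-- Squared subspace robust Wasserstein distance:
`S_k²(μ,ν) = inf_{π ∈ Π(μ,ν)} Σ_{l=1}^k λ_l(V_π)`. -/
def SRWsq {d : ℕ} (k : ℕ) (μ ν : Measure (Ed d)) : ℝ :=
  sInf ((fun π => topEigSum k (Vpi π) (Vpi_isHermitian π)) '' couplings μ ν)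

lemma norm_sq_eq {d : ℕ} (x : Ed d) : ‖x‖ ^ 2 = ∑ i, x i ^ 2 := by
  rw [EuclideanSpace.norm_eq, Real.sq_sqrt (by positivity)]
  simp [sq_abs]

lemma coord_sq_le {d : ℕ} (x : Ed d) (i : Fin d) : (x i) ^ 2 ≤ ‖x‖ ^ 2 := by
  rw [norm_sq_eq]
  exact Finset.single_le_sum (fun j _ => sq_nonneg (x j)) (Finset.mem_univ i)

variable {d : ℕ} {μ ν : Measure (Ed d)} {π : Measure (Ed d × Ed d)}

lemma integrable_cost (hπ : π ∈ couplings μ ν)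
    (hμ : Integrable (fun x => ‖x‖ ^ 2) μ) (hν : Integrable (fun x => ‖x‖ ^ 2) ν) :
    Integrable (fun p : Ed d × Ed d => ‖p.1 - p.2‖ ^ 2) π := by
  obtain ⟨hprob, h1, h2⟩ := hπ
  have hm1 : Integrable (fun p : Ed d × Ed d => ‖p.1‖ ^ 2) π := by
    exact (integrable_map_measure (g := fun x : Ed d => ‖x‖ ^ 2)
      ((continuous_norm.pow 2).aestronglyMeasurable)
      measurable_fst.aemeasurable).mp (by rwa [h1])
  have hm2 : Integrable (fun p : Ed d × Ed d => ‖p.2‖ ^ 2) π := by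
    exact (integrable_map_measure (g := fun x : Ed d => ‖x‖ ^ 2)
      ((continuous_norm.pow 2).aestronglyMeasurable)
      measurable_snd.aemeasurable).mp (by rwa [h2])
  refine Integrable.mono' (g := fun p : Ed d × Ed d => 2 * ‖p.1‖ ^ 2 + 2 * ‖p.2‖ ^ 2)
    ((hm1.const_mul 2).add (hm2.const_mul 2))
    (((continuous_fst.sub continuous_snd).norm.pow 2).aestronglyMeasurable)
    (Filter.Eventually.of_forall fun p => ?_)
  have h3 : ‖p.1 - p.2‖ ≤ ‖p.1‖ + ‖p.2‖ := norm_sub_le _ _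
  have h4 : (0:ℝ) ≤ ‖p.1 - p.2‖ := norm_nonneg _
  rw [Real.norm_of_nonneg (by positivity)]
  show ‖p.1 - p.2‖ ^ 2 ≤ 2 * ‖p.1‖ ^ 2 + 2 * ‖p.2‖ ^ 2
  nlinarith [sq_nonneg (‖p.1‖ - ‖p.2‖), mul_self_le_mul_self h4 h3, sq_nonneg ‖p.1 - p.2‖]

lemma integrable_entry (hc : Integrable (fun p : Ed d × Ed d => ‖p.1 - p.2‖ ^ 2) π)
    (i j : Fin d) :
    Integrable (fun p : Ed d × Ed d => (p.1 i - p.2 i) * (p.1 j - p.2 j)) π := by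
  have hcont : Continuous (fun p : Ed d × Ed d => (p.1 i - p.2 i) * (p.1 j - p.2 j)) := by
    fun_prop
  refine Integrable.mono' hc hcont.aestronglyMeasurable (Filter.Eventually.of_forall fun p => ?_)
  have hi : (p.1 i - p.2 i) ^ 2 ≤ ‖p.1 - p.2‖ ^ 2 := by
    simpa using coord_sq_le (p.1 - p.2) i
  have hj : (p.1 j - p.2 j) ^ 2 ≤ ‖p.1 - p.2‖ ^ 2 := by
    simpa using coord_sq_le (p.1 - p.2) j
  rw [Real.norm_eq_abs, abs_mul]
  nlinarith [abs_nonneg (p.1 i - p.2 i), abs_nonneg (p.1 j - p.2 j),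
    sq_abs (p.1 i - p.2 i), sq_abs (p.1 j - p.2 j)]

lemma Vpi_posSemidef (hc : Integrable (fun p : Ed d × Ed d => ‖p.1 - p.2‖ ^ 2) π) :
    (Vpi π).PosSemidef := by
  refine Matrix.PosSemidef.of_dotProduct_mulVec_nonneg (Vpi_isHermitian π) fun x => ?_
  have hint := integrable_entry (π := π) hc
  have key : dotProduct (star x) (Vpi π *ᵥ x)
      = ∫ p, (∑ i, x i * (p.1 i - p.2 i)) ^ 2 ∂π := by
    calc dotProduct (star x) (Vpi π *ᵥ x)
        = ∑ i, ∑ j, ∫ p, (x i * x j) * ((p.1 i - p.2 i) * (p.1 j - p.2 j)) ∂π := by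
          simp only [star_trivial, dotProduct, mulVec, Vpi, Matrix.of_apply, Finset.mul_sum]
          refine Finset.sum_congr rfl fun i _ => Finset.sum_congr rfl fun j _ => ?_
          rw [integral_const_mul]; ring
      _ = ∑ i, ∫ p, ∑ j, (x i * x j) * ((p.1 i - p.2 i) * (p.1 j - p.2 j)) ∂π := by
          refine Finset.sum_congr rfl fun i _ => ?_
          rw [integral_finset_sum _ (fun j _ => (hint i j).const_mul _)]
      _ = ∫ p, ∑ i, ∑ j, (x i * x j) * ((p.1 i - p.2 i) * (p.1 j - p.2 j)) ∂π := by
          rw [integral_finset_sum _ (fun i _ =>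
            integrable_finset_sum _ (fun j _ => (hint i j).const_mul _))]
      _ = ∫ p, (∑ i, x i * (p.1 i - p.2 i)) ^ 2 ∂π := by
          refine integral_congr_ae (Filter.Eventually.of_forall fun p => ?_)
          show _ = (∑ i, x i * (p.1 i - p.2 i)) ^ 2
          rw [sq, Finset.sum_mul_sum]
          exact Finset.sum_congr rfl fun i _ => Finset.sum_congr rfl fun j _ => by ring
  rw [key]
  exact integral_nonneg fun p => sq_nonneg _

lemma trace_Vpi (hc : Integrable (fun p : Ed d × Ed d => ‖p.1 - p.2‖ ^ 2) π) :
    (Vpi π).trace = transportCost π := by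
  have hint := integrable_entry (π := π) hc
  rw [Matrix.trace, transportCost]
  have : ∀ p : Ed d × Ed d, ‖p.1 - p.2‖ ^ 2 = ∑ i, (p.1 i - p.2 i) ^ 2 := by
    intro p; rw [norm_sq_eq]; exact Finset.sum_congr rfl fun i _ => by simp
  simp_rw [this]
  rw [integral_finset_sum _ (fun i _ => by simpa [sq] using hint i i)]
  refine Finset.sum_congr rfl fun i _ => ?_
  simp [Matrix.diag, Vpi, sq]

lemma eigDesc_antitone {V : Matrix (Fin d) (Fin d) ℝ} (h : V.IsHermitian) :
    Antitone (eigDesc V h) := by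
  intro i j hij
  exact Tuple.monotone_sort h.eigenvalues (Fin.rev_le_rev.mpr hij)

lemma sum_eigDesc {V : Matrix (Fin d) (Fin d) ℝ} (h : V.IsHermitian) :
    ∑ i, eigDesc V h i = ∑ i, h.eigenvalues i := by
  exact Equiv.sum_comp ((Fin.revPerm).trans (Tuple.sort h.eigenvalues)) h.eigenvalues

lemma card_filter_lt (hkd : k ≤ d) :
    (Finset.univ.filter (fun i : Fin d => (i : ℕ) < k)).card = k := by
  have : (Finset.univ.filter (fun i : Fin d => (i : ℕ) < k))
      = Finset.map (Fin.castLEEmb hkd) Finset.univ := by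
    ext i
    simp only [Finset.mem_filter, Finset.mem_univ, true_and, Finset.mem_map]
    constructor
    · intro hi; exact ⟨⟨i, hi⟩, rfl⟩
    · rintro ⟨j, rfl⟩; exact j.2
  rw [this, Finset.card_map, Finset.card_univ, Fintype.card_fin]

lemma top_sum_bounds (f : Fin d → ℝ) (hf : Antitone f) (hpos : ∀ i, 0 ≤ f i) (hkd : k ≤ d) :
    (k : ℝ) * ∑ i, f i ≤ d * ∑ i ∈ Finset.univ.filter (fun i : Fin d => (i : ℕ) < k), f i ∧
      ∑ i ∈ Finset.univ.filter (fun i : Fin d => (i : ℕ) < k), f i ≤ ∑ i, f i := by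
  set A := Finset.univ.filter (fun i : Fin d => (i : ℕ) < k) with hA
  set B := Finset.univ.filter (fun i : Fin d => ¬ (i : ℕ) < k) with hB
  have hsplit : ∑ i ∈ A, f i + ∑ i ∈ B, f i = ∑ i, f i :=
    Finset.sum_filter_add_sum_filter_not _ _ _
  have hupper : ∑ i ∈ A, f i ≤ ∑ i, f i :=
    Finset.sum_le_sum_of_subset_of_nonneg (Finset.subset_univ A)
      (fun i _ _ => hpos i)
  refine ⟨?_, hupper⟩
  have hcardA : A.card = k := card_filter_lt hkd
  have hcardB : B.card = d - k := by
    have huniv : A.card + B.card = d := by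
      rw [hA, hB]
      simpa [Finset.card_univ] using Finset.card_filter_add_card_filter_not
        (s := (Finset.univ : Finset (Fin d))) (p := fun i : Fin d => (i : ℕ) < k)
    omega
  have hkey : (A.card : ℝ) * ∑ b ∈ B, f b ≤ (B.card : ℝ) * ∑ a ∈ A, f a := by
    have h1 : ∑ a ∈ A, ∑ b ∈ B, f b ≤ ∑ a ∈ A, ∑ b ∈ B, f a := by
      refine Finset.sum_le_sum fun a ha => Finset.sum_le_sum fun b hb => ?_
      have ha' : (a : ℕ) < k := (Finset.mem_filter.mp ha).2
      have hb' : ¬ (b : ℕ) < k := (Finset.mem_filter.mp hb).2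
      exact hf (by omega : a ≤ b)
    have h2 : ∑ _a ∈ A, ∑ b ∈ B, f b = (A.card : ℝ) * ∑ b ∈ B, f b := by
      simp [Finset.sum_const, nsmul_eq_mul]
    have h3 : ∑ a ∈ A, ∑ _b ∈ B, f a = (B.card : ℝ) * ∑ a ∈ A, f a := by
      simp only [Finset.sum_const, nsmul_eq_mul]
      exact (Finset.mul_sum _ _ _).symm
    linarith [h1, h2, h3]
  have hAnn : 0 ≤ ∑ a ∈ A, f a := Finset.sum_nonneg fun i _ => hpos i
  have hBnn : 0 ≤ ∑ b ∈ B, f b := Finset.sum_nonneg fun i _ => hpos i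
  rw [hcardA, hcardB] at hkey
  have hcast : ((d - k : ℕ) : ℝ) = (d : ℝ) - k := by
    rw [Nat.cast_sub hkd]
  rw [hcast] at hkey
  nlinarith [hkey, hsplit]

lemma trace_eq_sum_eig {n : Type*} [Fintype n] [DecidableEq n] {A : Matrix n n ℝ}
    (hA : A.IsHermitian) : A.trace = ∑ i, hA.eigenvalues i := by
  simpa using hA.trace_eq_sum_eigenvalues

lemma per_coupling {k : ℕ} (hπ : π ∈ couplings μ ν)
    (hμ : Integrable (fun x => ‖x‖ ^ 2) μ) (hν : Integrable (fun x => ‖x‖ ^ 2) ν)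
    (hkd : k ≤ d) :
    (k : ℝ) * transportCost π ≤ d * topEigSum k (Vpi π) (Vpi_isHermitian π) ∧
      topEigSum k (Vpi π) (Vpi_isHermitian π) ≤ transportCost π ∧
      0 ≤ topEigSum k (Vpi π) (Vpi_isHermitian π) := by
  have hc := integrable_cost hπ hμ hν
  have hpsd := Vpi_posSemidef hc
  have hpos : ∀ i, 0 ≤ eigDesc (Vpi π) (Vpi_isHermitian π) i := fun i =>
    hpsd.eigenvalues_nonneg _
  have htr : ∑ i, eigDesc (Vpi π) (Vpi_isHermitian π) i = transportCost π := by
    rw [sum_eigDesc, ← trace_eq_sum_eig, trace_Vpi hc]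
  have hb := top_sum_bounds _ (eigDesc_antitone (Vpi_isHermitian π)) hpos hkd
  rw [htr] at hb
  exact ⟨hb.1, hb.2, Finset.sum_nonneg fun i _ => hpos i⟩

/-- Metric equivalence: `√(k/d)·W₂(μ,ν) ≤ S_k(μ,ν) ≤ W₂(μ,ν)`. -/
theorem SRW_equiv_W2 {d : ℕ} (k : ℕ) (hk : 1 ≤ k) (hkd : k ≤ d)
    (μ ν : Measure (Ed d)) [IsProbabilityMeasure μ] [IsProbabilityMeasure ν]
    (hμ : Integrable (fun x => ‖x‖ ^ 2) μ) (hν : Integrable (fun x => ‖x‖ ^ 2) ν) :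
    Real.sqrt ((k : ℝ) / d) * Real.sqrt (W2sq μ ν) ≤ Real.sqrt (SRWsq k μ ν) ∧
      Real.sqrt (SRWsq k μ ν) ≤ Real.sqrt (W2sq μ ν) := by
  have hd : 0 < (d : ℝ) := by exact_mod_cast Nat.lt_of_lt_of_le hk hkd
  have hmem : μ.prod ν ∈ couplings μ ν := by
    refine ⟨inferInstance, ?_, ?_⟩
    · rw [Measure.map_fst_prod]; simp
    · rw [Measure.map_snd_prod]; simp
  set S := (fun π => topEigSum k (Vpi π) (Vpi_isHermitian π)) '' couplings μ ν with hS
  set T := transportCost '' couplings μ ν with hT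
  have hSne : S.Nonempty := ⟨_, Set.mem_image_of_mem _ hmem⟩
  have hTne : T.Nonempty := ⟨_, Set.mem_image_of_mem _ hmem⟩
  have hT0 : ∀ t ∈ T, (0:ℝ) ≤ t := by
    rintro t ⟨π, hπ, rfl⟩
    exact integral_nonneg fun p => by positivity
  have hS0 : ∀ s ∈ S, (0:ℝ) ≤ s := by
    rintro s ⟨π, hπ, rfl⟩
    exact (per_coupling hπ hμ hν hkd).2.2
  have hbddS : BddBelow S := ⟨0, fun s hs => hS0 s hs⟩
  have hbddT : BddBelow T := ⟨0, fun t ht => hT0 t ht⟩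
  have hupper : SRWsq k μ ν ≤ W2sq μ ν := by
    rw [SRWsq, W2sq, ← hS, ← hT]
    refine le_csInf hTne ?_
    rintro t ⟨π, hπ, rfl⟩
    exact (csInf_le hbddS (Set.mem_image_of_mem _ hπ)).trans
      (per_coupling hπ hμ hν hkd).2.1
  have hlower : (k : ℝ) / d * W2sq μ ν ≤ SRWsq k μ ν := by
    rw [SRWsq, W2sq, ← hS, ← hT]
    refine le_csInf hSne ?_
    rintro s ⟨π, hπ, rfl⟩
    have h1 : sInf T ≤ transportCost π := csInf_le hbddT (Set.mem_image_of_mem _ hπ)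
    have h2 := (per_coupling hπ hμ hν hkd).1
    have hkpos : (0:ℝ) ≤ (k:ℝ) := by positivity
    rw [div_mul_eq_mul_div, div_le_iff₀ hd]
    calc (k : ℝ) * sInf T ≤ (k : ℝ) * transportCost π := by
          exact mul_le_mul_of_nonneg_left h1 hkpos
      _ ≤ d * topEigSum k (Vpi π) (Vpi_isHermitian π) := h2
      _ = topEigSum k (Vpi π) (Vpi_isHermitian π) * d := mul_comm _ _
  have hW0 : 0 ≤ W2sq μ ν := le_csInf hTne hT0
  constructor
  · rw [← Real.sqrt_mul (by positivity : (0:ℝ) ≤ (k:ℝ)/d)]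
    exact Real.sqrt_le_sqrt hlower
  · exact Real.sqrt_le_sqrt hupper
end
end

section
/- Let μ, ν ∈ P₂(ℝ^d) and for each L ∈ {1,…,d} let π_L ∈ Π(μ,ν) minimize the sum of the top L eigenvalues of V_π. Then for any k ∈ {1,…,d−1}: λ_{k+1}(V_{π_{k+1}}) ≤ S_{k+1}²(μ,ν) − S_k²(μ,ν) ≤ λ_{k+1}(V_{π_k}). -/
noncomputable section
open MeasureTheory Matrix

lemma topEigSum_succ {d : ℕ} (k : ℕ) (hkd : k < d) (V : Matrix (Fin d) (Fin d) ℝ)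
    (h : V.IsHermitian) :
    topEigSum (k+1) V h = topEigSum k V h + eigDesc V h ⟨k, hkd⟩ := by
  unfold topEigSum
  have hset : Finset.univ.filter (fun i : Fin d => (i : ℕ) < k + 1)
      = insert (⟨k, hkd⟩ : Fin d) (Finset.univ.filter (fun i : Fin d => (i : ℕ) < k)) := by
    ext i
    simp [Nat.lt_succ_iff_lt_or_eq, Fin.ext_iff, or_comm]
    constructor <;> intro h <;> omega
  rw [hset, Finset.sum_insert (by simp), add_comm]

lemma SRWsq_eq_of_min {d : ℕ} (k : ℕ) (μ ν : Measure (Ed d)) (π : Measure (Ed d × Ed d))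
    (hπ : π ∈ couplings μ ν)
    (hmin : ∀ π' ∈ couplings μ ν,
      topEigSum k (Vpi π) (Vpi_isHermitian π) ≤ topEigSum k (Vpi π') (Vpi_isHermitian π')) :
    SRWsq k μ ν = topEigSum k (Vpi π) (Vpi_isHermitian π) := by
  apply IsLeast.csInf_eq
  constructor
  · exact ⟨π, hπ, rfl⟩
  · rintro x ⟨π', hπ', rfl⟩
    exact hmin π' hπ'

/-- For minimizers `π_L` of `π ↦ Σ_{l=1}^L λ_l(V_π)`, one has
`λ_{k+1}(V_{π_{k+1}}) ≤ S_{k+1}²(μ,ν) − S_k²(μ,ν) ≤ λ_{k+1}(V_{π_k})`. -/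
theorem SRWsq_increments {d : ℕ} (k : ℕ) (hk : 1 ≤ k) (hkd : k < d)
    (μ ν : Measure (Ed d)) [IsProbabilityMeasure μ] [IsProbabilityMeasure ν]
    (hμ : Integrable (fun x => ‖x‖ ^ 2) μ) (hν : Integrable (fun x => ‖x‖ ^ 2) ν)
    (πk πk1 : Measure (Ed d × Ed d))
    (hπk : πk ∈ couplings μ ν) (hπk1 : πk1 ∈ couplings μ ν)
    (hmink : ∀ π ∈ couplings μ ν,
      topEigSum k (Vpi πk) (Vpi_isHermitian πk) ≤ topEigSum k (Vpi π) (Vpi_isHermitian π))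
    (hmink1 : ∀ π ∈ couplings μ ν,
      topEigSum (k+1) (Vpi πk1) (Vpi_isHermitian πk1) ≤
        topEigSum (k+1) (Vpi π) (Vpi_isHermitian π)) :
    eigDesc (Vpi πk1) (Vpi_isHermitian πk1) ⟨k, hkd⟩ ≤ SRWsq (k+1) μ ν - SRWsq k μ ν ∧
      SRWsq (k+1) μ ν - SRWsq k μ ν ≤ eigDesc (Vpi πk) (Vpi_isHermitian πk) ⟨k, hkd⟩ := by
  have hk' : k < k + 1 := Nat.lt_succ_self k
  have e1 : SRWsq k μ ν = topEigSum k (Vpi πk) (Vpi_isHermitian πk) :=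
    SRWsq_eq_of_min k μ ν πk hπk hmink
  have e2 : SRWsq (k+1) μ ν = topEigSum (k+1) (Vpi πk1) (Vpi_isHermitian πk1) :=
    SRWsq_eq_of_min (k+1) μ ν πk1 hπk1 hmink1
  have h1 := topEigSum_succ k hkd (Vpi πk1) (Vpi_isHermitian πk1)
  have h2 := topEigSum_succ k hkd (Vpi πk) (Vpi_isHermitian πk)
  have hle1 : topEigSum k (Vpi πk) (Vpi_isHermitian πk)
      ≤ topEigSum k (Vpi πk1) (Vpi_isHermitian πk1) := hmink πk1 hπk1
  have hle2 : topEigSum (k+1) (Vpi πk1) (Vpi_isHermitian πk1)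
      ≤ topEigSum (k+1) (Vpi πk) (Vpi_isHermitian πk) := hmink1 πk hπk
  constructor
  · rw [e1, e2, h1]; linarith
  · rw [e1, e2]; linarith
end
end
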